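/- Let (J_u)_{u=0}^T be an inhomogeneous Markov chain on {1,…,N} evolving backward in time with transition matrices Λ_u each satisfying the Doeblin condition Λ_u(i,j) ≥ (1−ρ)·ν_u(j) for probability vectors ν_u. Fix r ≥ 0, points ξ_s^j ∈ X, and a bounded measurable h on X^{r+1}. Let G_u = σ(ξ's) ∨ σ(J_v, u ≤ v ≤ T). Then for r ≤ t ≤ u ≤ T, |E[h(ξ_{t−r}^{J_{t−r}},…,ξ_t^{J_t}) | G_u] − E[h(ξ_{t−r}^{J_{t−r}},…,ξ_t^{J_t}) | G_{u+1}]| ≤ ρ^{u−t}·osc(h) almost surely. -/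

import Mathlib

open Finset

/-- extension of a finite path by a constant state above `w`. -/
def bcfExt {N w : ℕ} (j : Fin w → Fin N) (i : Fin N) (m : ℕ) : Fin N :=
  if hm : m < w then j ⟨m, hm⟩ else i

noncomputable def bcfF {X : Type*} {N : ℕ} (r t : ℕ) (Λ : ℕ → Fin N → Fin N → ℝ)
    (ξ : ℕ → Fin N → X) (h : (Fin (r + 1) → X) → ℝ) (w : ℕ) (i : Fin N) : ℝ :=
  ∑ j : Fin w → Fin N,
    (∏ v ∈ Finset.range w, Λ v (bcfExt j i (v + 1)) (bcfExt j i v)) *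
      h (fun q => ξ (t - r + q) (bcfExt j i (t - r + (q : ℕ))))

lemma bcfExt_congr {N w : ℕ} (j : Fin w → Fin N) (i i' : Fin N) {m : ℕ} (hm : m < w) :
    bcfExt j i m = bcfExt j i' m := by simp [bcfExt, hm]

lemma bcfExt_lt {N w : ℕ} (j : Fin w → Fin N) (i : Fin N) {m : ℕ} (hm : m < w) :
    bcfExt j i m = j ⟨m, hm⟩ := by simp [bcfExt, hm]

lemma bcfExt_ge {N w : ℕ} (j : Fin w → Fin N) (i : Fin N) {m : ℕ} (hm : w ≤ m) :
    bcfExt j i m = i := by simp [bcfExt, Nat.not_lt.2 hm]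

def bcfEquiv (N w : ℕ) : ((Fin w → Fin N) × Fin N) ≃ (Fin (w + 1) → Fin N) where
  toFun p m := if hm : (m : ℕ) < w then p.1 ⟨m, hm⟩ else p.2
  invFun j := (fun v => j ⟨v, by omega⟩, j ⟨w, by omega⟩)
  left_inv p := by
    ext m
    · simp
    · simp
  right_inv j := by
    funext m
    rcases m with ⟨m, hm⟩
    by_cases hmw : m < w
    · simp [hmw]
    · simp only [hmw, dif_neg, not_false_iff]
      have hmweq : m = w := by omega
      subst hmweq
      rfl

lemma bcfEquiv_ext {N w : ℕ} (j : Fin w → Fin N) (k i : Fin N) {m : ℕ} (hm : m ≤ w) :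
    bcfExt (bcfEquiv N w (j, k)) i m = bcfExt j k m := by
  unfold bcfExt bcfEquiv
  rcases Nat.lt_or_ge m w with hw | hw
  · simp [hw, Nat.lt_succ_of_lt hw]
  · have : m = w := le_antisymm hm hw
    subst this
    simp [Nat.lt_irrefl, Nat.lt_succ_self]
open Finset
section
variable {X : Type*} {N : ℕ}

lemma bcfF_succ (r t : ℕ) (Λ : ℕ → Fin N → Fin N → ℝ)
    (ξ : ℕ → Fin N → X) (h : (Fin (r + 1) → X) → ℝ) {w : ℕ}
    (hrt : r ≤ t) (htw : t ≤ w) (i : Fin N) :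
    bcfF r t Λ ξ h (w + 1) i = ∑ k, Λ w i k * bcfF r t Λ ξ h w k := by
  unfold bcfF
  rw [← (bcfEquiv N w).sum_comp
    (fun j => (∏ v ∈ Finset.range (w+1), Λ v (bcfExt j i (v + 1)) (bcfExt j i v)) *
      h (fun q => ξ (t - r + q) (bcfExt j i (t - r + (q : ℕ)))))]
  rw [Fintype.sum_prod_type_right]
  refine Finset.sum_congr rfl fun k _ => ?_
  rw [Finset.mul_sum]
  refine Finset.sum_congr rfl fun j _ => ?_
  have hwin : ∀ q : Fin (r+1), bcfExt (bcfEquiv N w (j, k)) i (t - r + (q:ℕ))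
      = bcfExt j k (t - r + (q:ℕ)) := by
    intro q
    exact bcfEquiv_ext j k i (by omega)
  have hprod : ∀ v ∈ Finset.range w,
      Λ v (bcfExt (bcfEquiv N w (j, k)) i (v + 1)) (bcfExt (bcfEquiv N w (j, k)) i v)
      = Λ v (bcfExt j k (v + 1)) (bcfExt j k v) := by
    intro v hv
    rw [Finset.mem_range] at hv
    rw [bcfEquiv_ext j k i (by omega), bcfEquiv_ext j k i (by omega)]
  rw [Finset.prod_range_succ, Finset.prod_congr rfl hprod]
  have h1 : bcfExt (bcfEquiv N w (j, k)) i (w + 1) = i := bcfExt_ge _ _ (le_refl _)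
  have h2 : bcfExt (bcfEquiv N w (j, k)) i w = k := by
    rw [bcfEquiv_ext j k i (le_refl _), bcfExt_ge _ _ (le_refl _)]
  rw [h1, h2]
  have hw2 : (fun q : Fin (r+1) => ξ (t - r + q) (bcfExt (bcfEquiv N w (j, k)) i (t - r + (q:ℕ))))
      = fun q : Fin (r+1) => ξ (t - r + q) (bcfExt j k (t - r + (q:ℕ))) := by
    funext q; rw [hwin q]
  rw [hw2]
  ring

lemma bcf_mass (Λ : ℕ → Fin N → Fin N → ℝ)
    (hstoch : ∀ v i, (∀ j, 0 ≤ Λ v i j) ∧ ∑ j, Λ v i j = 1) :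
    ∀ (w : ℕ) (i : Fin N),
      ∑ j : Fin w → Fin N, ∏ v ∈ Finset.range w, Λ v (bcfExt j i (v + 1)) (bcfExt j i v) = 1 := by
  have key : ∀ (w : ℕ) (i : Fin N),
      bcfF (X := Unit) 0 0 Λ (fun _ _ => ()) (fun _ => 1) w i = 1 := by
    intro w
    induction w with
    | zero => intro i; simp [bcfF]
    | succ w ih =>
      intro i
      rw [bcfF_succ 0 0 Λ _ _ (le_refl 0) (Nat.zero_le w) i]
      simp [ih, (hstoch w i).2]
  intro w i
  have := key w i
  simpa [bcfF] using this
end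
open Finset

lemma bcf_double_sum_osc {ι κ : Type*} [Fintype ι] [Fintype κ]
    (p : ι → ℝ) (q : κ → ℝ) (hp0 : ∀ i, 0 ≤ p i) (hq0 : ∀ k, 0 ≤ q k)
    (c : ℝ) (hpc : ∑ i, p i = c) (hqc : ∑ k, q k = c)
    (a : ι → ℝ) (b : κ → ℝ) (D : ℝ)
    (hD : ∀ i k, |a i - b k| ≤ D) :
    |∑ i, p i * a i - ∑ k, q k * b k| ≤ c * D := by
  have hc0 : 0 ≤ c := hpc ▸ Finset.sum_nonneg fun i _ => hp0 i
  rcases eq_or_lt_of_le hc0 with hc | hc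
  · have hp' : ∀ i ∈ Finset.univ, p i = 0 :=
      (Finset.sum_eq_zero_iff_of_nonneg (fun i _ => hp0 i)).1 (by rw [hpc, ← hc])
    have hq' : ∀ k ∈ Finset.univ, q k = 0 :=
      (Finset.sum_eq_zero_iff_of_nonneg (fun k _ => hq0 k)).1 (by rw [hqc, ← hc])
    have e1 : ∑ i, p i * a i = 0 :=
      Finset.sum_eq_zero fun i _ => by rw [hp' i (Finset.mem_univ i), zero_mul]
    have e2 : ∑ k, q k * b k = 0 :=
      Finset.sum_eq_zero fun k _ => by rw [hq' k (Finset.mem_univ k), zero_mul]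
    rw [e1, e2, sub_zero, abs_zero, ← hc, zero_mul]
  · have key : c * (∑ i, p i * a i - ∑ k, q k * b k)
        = ∑ i, ∑ k, p i * q k * (a i - b k) := by
      have : ∑ i, ∑ k, p i * q k * (a i - b k)
          = ∑ i, ((∑ k, q k) * (p i * a i) - p i * (∑ k, q k * b k)) := by
        refine Finset.sum_congr rfl fun i _ => ?_
        rw [Finset.sum_mul, Finset.mul_sum]
        rw [← Finset.sum_sub_distrib]
        refine Finset.sum_congr rfl fun k _ => ?_
        ring
      rw [this, Finset.sum_sub_distrib, ← Finset.mul_sum, ← Finset.sum_mul, hpc, hqc]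
      ring
    have hbound : |∑ i, ∑ k, p i * q k * (a i - b k)| ≤ c * (c * D) := by
      calc |∑ i, ∑ k, p i * q k * (a i - b k)|
          ≤ ∑ i, |∑ k, p i * q k * (a i - b k)| := Finset.abs_sum_le_sum_abs _ _
        _ ≤ ∑ i, ∑ k, |p i * q k * (a i - b k)| :=
            Finset.sum_le_sum fun i _ => Finset.abs_sum_le_sum_abs _ _
        _ ≤ ∑ i, ∑ k, p i * q k * D := by
            refine Finset.sum_le_sum fun i _ => Finset.sum_le_sum fun k _ => ?_
            rw [abs_mul, abs_of_nonneg (mul_nonneg (hp0 i) (hq0 k))]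
            exact mul_le_mul_of_nonneg_left (hD i k) (mul_nonneg (hp0 i) (hq0 k))
        _ = c * (c * D) := by
            simp only [← Finset.sum_mul, ← Finset.mul_sum]
            rw [hpc, hqc]
            ring
    rw [← key, abs_mul, abs_of_pos hc] at hbound
    exact le_of_mul_le_mul_left hbound hc
open Finset

lemma bcf_osc {X : Type*} {N T : ℕ} (ρ : ℝ) (hρ0 : 0 ≤ ρ)
    (Λ : ℕ → Fin N → Fin N → ℝ)
    (hstoch : ∀ v i, (∀ j, 0 ≤ Λ v i j) ∧ ∑ j, Λ v i j = 1)
    (ν : ℕ → Fin N → ℝ) (hν : ∀ v, (∀ j, 0 ≤ ν v j) ∧ ∑ j, ν v j = 1)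
    (hdoeb : ∀ v, v ≤ T → ∀ i j, (1 - ρ) * ν v j ≤ Λ v i j)
    (r t : ℕ) (hrt : r ≤ t)
    (ξ : ℕ → Fin N → X) (h : (Fin (r + 1) → X) → ℝ)
    (osc : ℝ) (hosc : ∀ z z', |h z - h z'| ≤ osc) :
    ∀ w, t ≤ w → w ≤ T + 1 → ∀ a b : Fin N,
      |bcfF r t Λ ξ h w a - bcfF r t Λ ξ h w b| ≤ ρ ^ (w - t) * osc := by
  intro w htw
  induction w, htw using Nat.le_induction with
  | base =>
    intro _ a b
    rw [Nat.sub_self, pow_zero, one_mul]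
    unfold bcfF
    have := bcf_double_sum_osc
      (fun j : Fin t → Fin N => ∏ v ∈ Finset.range t, Λ v (bcfExt j a (v+1)) (bcfExt j a v))
      (fun j : Fin t → Fin N => ∏ v ∈ Finset.range t, Λ v (bcfExt j b (v+1)) (bcfExt j b v))
      (fun j => Finset.prod_nonneg fun v _ => (hstoch v _).1 _)
      (fun j => Finset.prod_nonneg fun v _ => (hstoch v _).1 _)
      1 (bcf_mass Λ hstoch t a) (bcf_mass Λ hstoch t b)
      (fun j => h (fun q => ξ (t - r + q) (bcfExt j a (t - r + (q:ℕ)))))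
      (fun j => h (fun q => ξ (t - r + q) (bcfExt j b (t - r + (q:ℕ)))))
      osc (fun i k => hosc _ _)
    simpa using this
  | succ w hw ih =>
    intro hwT a b
    have hwT' : w ≤ T := by omega
    have ih' := ih (by omega)
    rw [bcfF_succ r t Λ ξ h hrt hw a, bcfF_succ r t Λ ξ h hrt hw b]
    set F := bcfF r t Λ ξ h w with hF
    set P : Fin N → Fin N → ℝ := fun i k => Λ w i k - (1 - ρ) * ν w k with hP
    have hsplit : ∀ i : Fin N, ∑ k, Λ w i k * F k
        = ∑ k, P i k * F k + ∑ k, ((1 - ρ) * ν w k) * F k := by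
      intro i
      rw [← Finset.sum_add_distrib]
      refine Finset.sum_congr rfl fun k _ => ?_
      simp [hP]; ring
    rw [hsplit a, hsplit b, add_sub_add_right_eq_sub]
    have hPsum : ∀ i : Fin N, ∑ k, P i k = ρ := by
      intro i
      simp only [hP]
      rw [Finset.sum_sub_distrib, (hstoch w i).2, ← Finset.mul_sum, (hν w).2]
      ring
    have hle : (w + 1 - t) = (w - t) + 1 := by omega
    rw [hle, pow_succ, mul_comm (ρ ^ (w - t)) ρ, mul_assoc]
    exact bcf_double_sum_osc (P a) (P b)
      (fun k => sub_nonneg.2 (hdoeb w hwT' a k))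
      (fun k => sub_nonneg.2 (hdoeb w hwT' b k))
      ρ (hPsum a) (hPsum b) F F (ρ ^ (w - t) * osc) (fun i k => ih' i k)
open MeasureTheory ProbabilityTheory Finset



open MeasureTheory ProbabilityTheory Finset

/-- Backward-in-time inhomogeneous Markov chain with Doeblin-minorized
transitions: successive conditional expectations of a fixed-window functional differ by at
most `ρ^{u−t}·osc(h)`. The backward chain structure is encoded by `hlaw`, which gives the
conditional law of the whole path given `G_w` (coordinates `< w` distributed according to
the product of the backward kernels, started from `J_w`). -/
theorem backward_chain_forgetting
    {Ω X : Type*} [mΩ : MeasurableSpace Ω] (μ : Measure Ω) [IsProbabilityMeasure μ]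
    (N T : ℕ) (hN : 0 < N) (ρ : ℝ) (hρ0 : 0 ≤ ρ) (hρ1 : ρ < 1)
    (Λ : ℕ → Fin N → Fin N → ℝ)
    (hstoch : ∀ v i, (∀ j, 0 ≤ Λ v i j) ∧ ∑ j, Λ v i j = 1)
    (ν : ℕ → Fin N → ℝ)
    (hν : ∀ v, (∀ j, 0 ≤ ν v j) ∧ ∑ j, ν v j = 1)
    (hdoeb : ∀ v, v ≤ T → ∀ i j, (1 - ρ) * ν v j ≤ Λ v i j)
    (J : ℕ → Ω → Fin N) (hJ : ∀ v, Measurable (J v))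
    (G : ℕ → MeasurableSpace Ω) (hG : ∀ u, G u ≤ mΩ) (hanti : Antitone G)
    (hadapt : ∀ u v : ℕ, u ≤ v → Measurable[G u] (J v))
    (hlaw : ∀ w : ℕ, w ≤ T + 1 → ∀ φ : (ℕ → Fin N) → ℝ,
      Measurable φ → (∃ Cφ : ℝ, ∀ z, |φ z| ≤ Cφ) →
      μ[fun ω => φ (fun v => J v ω) | G w] =ᵐ[μ]
        fun ω => ∑ j : Fin w → Fin N,
          (∏ v ∈ Finset.range w,
            Λ v ((fun u : ℕ => if hu : u < w then j ⟨u, hu⟩ else J u ω) (v + 1))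
              ((fun u : ℕ => if hu : u < w then j ⟨u, hu⟩ else J u ω) v)) *
          φ (fun u : ℕ => if hu : u < w then j ⟨u, hu⟩ else J u ω))
    (r t u : ℕ) (hrt : r ≤ t) (htu : t ≤ u) (huT : u ≤ T)
    (ξ : ℕ → Fin N → X) (h : (Fin (r + 1) → X) → ℝ)
    (osc : ℝ) (hosc : ∀ z z', |h z - h z'| ≤ osc) :
    ∀ᵐ ω ∂μ,
      |MeasureTheory.condExp (G u) μ
          (fun ω' => h (fun i => ξ (t - r + i) (J (t - r + i) ω'))) ω -
        MeasureTheory.condExp (G (u + 1)) μ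
          (fun ω' => h (fun i => ξ (t - r + i) (J (t - r + i) ω'))) ω|
      ≤ ρ ^ (u - t) * osc := by
  classical
  set φ : (ℕ → Fin N) → ℝ :=
    fun z => h (fun i : Fin (r + 1) => ξ (t - r + i) (z (t - r + (i : ℕ)))) with hφdef
  have hφm : Measurable φ := by
    have e : Measurable (fun z : ℕ → Fin N => (fun q : Fin (r + 1) => z (t - r + (q : ℕ)))) :=
      measurable_pi_lambda _ fun q => measurable_pi_apply _
    exact (measurable_of_countable
      (fun y : Fin (r + 1) → Fin N => h (fun q => ξ (t - r + q) (y q)))).comp e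
  have hφb : ∃ Cφ : ℝ, ∀ z, |φ z| ≤ Cφ := by
    refine ⟨|h (fun _ => ξ 0 ⟨0, hN⟩)| + osc, fun z => ?_⟩
    have h1 := hosc (fun i : Fin (r + 1) => ξ (t - r + i) (z (t - r + (i : ℕ))))
      (fun _ => ξ 0 ⟨0, hN⟩)
    have : |φ z| ≤ |φ z - h (fun _ => ξ 0 ⟨0, hN⟩)| + |h (fun _ => ξ 0 ⟨0, hN⟩)| := by
      have := abs_sub_abs_le_abs_sub (φ z) (h (fun _ => ξ 0 ⟨0, hN⟩))
      linarith [abs_nonneg (h (fun _ => ξ 0 ⟨0, hN⟩))]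
    linarith [h1]
  have h1 := hlaw u (by omega) φ hφm hφb
  have h2 := hlaw (u + 1) (by omega) φ hφm hφb
  -- pointwise identification of the hlaw RHS with bcfF
  have hpt : ∀ (w : ℕ), t ≤ w → ∀ ω : Ω,
      (∑ j : Fin w → Fin N,
        (∏ v ∈ Finset.range w,
          Λ v ((fun m : ℕ => if hm : m < w then j ⟨m, hm⟩ else J m ω) (v + 1))
            ((fun m : ℕ => if hm : m < w then j ⟨m, hm⟩ else J m ω) v)) *
        φ (fun m : ℕ => if hm : m < w then j ⟨m, hm⟩ else J m ω))
      = bcfF r t Λ ξ h w (J w ω) := by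
    intro w htw ω
    unfold bcfF
    refine Finset.sum_congr rfl fun j _ => ?_
    have hm : ∀ m : ℕ, m ≤ w →
        (if hm : m < w then j ⟨m, hm⟩ else J m ω) = bcfExt j (J w ω) m := by
      intro m hmw
      unfold bcfExt
      by_cases h' : m < w
      · simp [h']
      · have : m = w := by omega
        subst this
        simp [h']
    congr 1
    · refine Finset.prod_congr rfl fun v hv => ?_
      rw [Finset.mem_range] at hv
      show Λ v (if hm : v + 1 < w then j ⟨v + 1, hm⟩ else J (v + 1) ω)
          (if hm : v < w then j ⟨v, hm⟩ else J v ω) = _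
      rw [hm (v + 1) (by omega), hm v (by omega)]
    · show h _ = h _
      congr 1
      funext q
      have hq : t - r + (q : ℕ) ≤ w := by
        have := q.isLt
        omega
      show ξ _ (if hm : t - r + (q : ℕ) < w then j ⟨t - r + (q : ℕ), hm⟩ else J (t - r + (q : ℕ)) ω) = _
      rw [hm _ hq]
  -- deterministic bound
  have hbound : ∀ a k : Fin N,
      |bcfF r t Λ ξ h u a - bcfF r t Λ ξ h (u + 1) k| ≤ ρ ^ (u - t) * osc := by
    intro a k
    rw [bcfF_succ r t Λ ξ h hrt htu k]
    have hoF := bcf_osc (T := T) ρ hρ0 Λ hstoch ν hν hdoeb r t hrt ξ h osc hosc u htu (by omega)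
    have := bcf_double_sum_osc
      (fun i : Fin N => if i = a then (1 : ℝ) else 0) (Λ u k)
      (fun i => by positivity) (fun i => (hstoch u k).1 i)
      1 (by simp) (hstoch u k).2
      (bcfF r t Λ ξ h u) (bcfF r t Λ ξ h u) (ρ ^ (u - t) * osc)
      (fun i k' => hoF i k')
    rw [one_mul] at this
    have hsum : ∑ i : Fin N, (if i = a then (1 : ℝ) else 0) * bcfF r t Λ ξ h u i
        = bcfF r t Λ ξ h u a := by
      rw [Finset.sum_eq_single a]
      · simp
      · intro i _ hi; simp [hi]
      · intro habs; exact absurd (Finset.mem_univ a) habs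
    rwa [hsum] at this
  have hfun : (fun ω' => h (fun i => ξ (t - r + i) (J (t - r + i) ω')))
      = (fun ω => φ (fun v => J v ω)) := rfl
  rw [hfun]
  filter_upwards [h1, h2] with ω e1 e2
  rw [e1, e2]
  have r1 := hpt u htu ω
  have r2 := hpt (u + 1) (by omega) ω
  simp only at r1 r2 ⊢
  rw [r1, r2]
  exact hbound (J u ω) (J (u + 1) ω)
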